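/- Let d ≥ 3, k = [d/4], R > 0, and suppose d is odd. The functions r^{2i−d}, 1 ≤ i ≤ k, are linearly independent in L²(r ≥ R, r^{d−1} dr), and for any g ∈ L²(r ≥ R, r^{d−1} dr) the squared norm of the orthogonal projection of g onto the orthogonal complement of W = span{r^{2i−d} : 1 ≤ i ≤ k} equals ∫_R^∞ |g(r)|² r^{d−1} dr − ∑_{i,j=1}^k (R^{d−2i−2j}/(d−2i−2j)) c_i c_j (∫_R^∞ g(r) r^{2i−1} dr)(∫_R^∞ \overline{g(r)} r^{2j−1} dr), where c_j = ∏_{ℓ=1}^k (d − 2j − 2ℓ) / ∏_{1≤ℓ≤k, ℓ≠j} (2ℓ − 2j). -/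

import Mathlib

open MeasureTheory Set Finset Polynomial



-- evaluated Lagrange interpolation identity
lemma eval_lagrange (k : ℕ) (d : ℝ) (_hdodd : ∀ m n : ℕ, d ≠ 2*m + 2*n)
    (i : ℕ) (hi : i ∈ Finset.Icc 1 k) (t : ℝ) :
    ∑ j ∈ Finset.Icc 1 k, (∏ m ∈ (Finset.Icc 1 k).erase i, (d - 2*j - 2*m)) *
        ∏ m ∈ (Finset.Icc 1 k).erase j, ((2*(m:ℝ) - 2*(j:ℝ))⁻¹ * (t - (d - 2*m)))
      = ∏ m ∈ (Finset.Icc 1 k).erase i, (t - 2*m) := by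
  set s := Finset.Icc 1 k with hs
  set v : ℕ → ℝ := fun j => d - 2*j with hv
  have hinj : Set.InjOn v s := by
    intro a _ b _ hab
    simp only [hv] at hab
    have : (2*a : ℝ) = 2*b := by linarith
    have : (a : ℝ) = b := by linarith
    exact_mod_cast this
  set f : ℝ[X] := ∏ m ∈ s.erase i, (X - C (2*(m:ℝ))) with hf
  have hdeg : f.degree < #s := by
    rw [hf, degree_prod]
    simp only [degree_X_sub_C]
    rw [Finset.sum_const, nsmul_eq_mul, mul_one]
    have h1 : (s.erase i).card < s.card := Finset.card_erase_lt_of_mem hi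
    exact_mod_cast Nat.cast_lt.mpr h1
  have h := Lagrange.eq_interpolate (v := v) hinj hdeg
  have h2 := congrArg (Polynomial.eval t) h
  rw [Lagrange.interpolate_apply] at h2
  simp only [eval_finset_sum, eval_mul, eval_C, Lagrange.basis, eval_prod,
    Lagrange.basisDivisor, eval_sub, eval_X, hf] at h2
  rw [h2]
  refine Finset.sum_congr rfl fun j hj => ?_
  refine congrArg₂ (· * ·) (Finset.prod_congr rfl fun m _ => by simp [hv])
    (Finset.prod_congr rfl fun m _ => ?_)
  have hvv : (2*(m:ℝ) - 2*(j:ℝ)) = v j - v m := by simp only [hv]; ring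
  rw [hvv]

open Finset

lemma key_ident (k : ℕ) (d : ℝ) (hD : ∀ m n : ℕ, d - 2*m - 2*n ≠ 0)
    (i l : ℕ) (hi : i ∈ Finset.Icc 1 k) (hl : l ∈ Finset.Icc 1 k) :
    ∑ j ∈ Finset.Icc 1 k,
      ((∏ m ∈ Finset.Icc 1 k, (d - 2*j - 2*m)) /
        (∏ m ∈ (Finset.Icc 1 k).erase j, (2*(m:ℝ) - 2*j))) *
      ((∏ m ∈ Finset.Icc 1 k, (d - 2*l - 2*m)) /
        (∏ m ∈ (Finset.Icc 1 k).erase l, (2*(m:ℝ) - 2*l))) /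
      ((d - 2*i - 2*j) * (d - 2*j - 2*l))
      = if i = l then 1 else 0 := by
  set s := Finset.Icc 1 k with hs
  set P : ℕ → ℝ := fun j => ∏ m ∈ s, (d - 2*j - 2*m) with hP
  set D : ℕ → ℝ := fun j => ∏ m ∈ s.erase j, (2*(m:ℝ) - 2*j) with hDdef
  have hPne : ∀ j : ℕ, P j ≠ 0 := fun j =>
    Finset.prod_ne_zero_iff.mpr fun m _ => hD j m
  have hDne : ∀ j : ℕ, D j ≠ 0 := by
    intro j
    refine Finset.prod_ne_zero_iff.mpr fun m hm => ?_
    have hmj : m ≠ j := (Finset.mem_erase.mp hm).1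
    have : (m : ℝ) ≠ j := by exact_mod_cast hmj
    intro hc; apply this; linarith
  set Pl : ℝ := ∏ m ∈ s, (2*(l:ℝ) - (d - 2*m)) with hPl
  have hPlne : Pl ≠ 0 := by
    refine Finset.prod_ne_zero_iff.mpr fun m _ => ?_
    have := hD l m; intro hc; apply this; linarith
  have heval := eval_lagrange k d (fun m n h => hD m n (by rw [h]; ring)) i hi (2*l)
  -- termwise rewrite of the sum
  have hterm : ∀ j ∈ s,
      (P j / D j) * (P l / D l) / ((d - 2*i - 2*j) * (d - 2*j - 2*l))
      = ((∏ m ∈ s.erase i, (d - 2*j - 2*m)) *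
          ∏ m ∈ s.erase j, ((2*(m:ℝ) - 2*(j:ℝ))⁻¹ * (2*(l:ℝ) - (d - 2*m))))
        * (-(P l / D l) / Pl) := by
    intro j hj
    have h1 : (∏ m ∈ s.erase i, (d - 2*j - 2*m)) = P j / (d - 2*j - 2*i) := by
      rw [eq_div_iff (hD j i), hP]
      exact Finset.prod_erase_mul s _ hi
    have h2 : (∏ m ∈ s.erase j, (2*(l:ℝ) - (d - 2*m))) = Pl / (2*l - (d - 2*j)) := by
      have hne : (2*(l:ℝ) - (d - 2*j)) ≠ 0 := by
        have := hD j l; intro hc; apply this; linarith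
      rw [eq_div_iff hne, hPl]
      exact Finset.prod_erase_mul s _ hj
    rw [Finset.prod_mul_distrib, Finset.prod_inv_distrib, h1, h2]
    have h6 : (∏ m ∈ s.erase j, (2*(m:ℝ) - 2*(j:ℝ))) = D j := rfl
    rw [h6]
    have hne1 : (d - 2*(i:ℝ) - 2*j) ≠ 0 := hD i j
    have hne2 : (d - 2*(j:ℝ) - 2*l) ≠ 0 := hD j l
    have hne3 : (d - 2*(j:ℝ) - 2*i) ≠ 0 := hD j i
    have hne4 : (2*(l:ℝ) - (d - 2*j)) ≠ 0 := by intro hc; apply hD j l; linarith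
    have := hDne j; have := hDne l
    field_simp
    ring
  rw [Finset.sum_congr rfl hterm, ← Finset.sum_mul, heval]
  by_cases hil : i = l
  · subst hil
    rw [if_pos rfl]
    -- (∏ m ∈ erase i, (2i - 2m)) * (-(P i / D i) / Pl) = 1
    have h3 : (∏ m ∈ s.erase i, (2*(i:ℝ) - 2*m)) = (-1)^((s.erase i).card) * D i := by
      rw [hDdef, ← Finset.prod_const (-1 : ℝ), ← Finset.prod_mul_distrib]
      exact Finset.prod_congr rfl fun m _ => by ring
    have h4 : Pl = (-1)^(s.card) * P i := by
      rw [hPl, hP, ← Finset.prod_const (-1 : ℝ), ← Finset.prod_mul_distrib]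
      exact Finset.prod_congr rfl fun m _ => by ring
    have h5 : s.card = (s.erase i).card + 1 := (Finset.card_erase_add_one hi).symm
    rw [h3, h4, h5, pow_succ]
    have := hPne i; have := hDne i
    have hm1 : ((-1:ℝ))^((s.erase i).card) ≠ 0 := pow_ne_zero _ (by norm_num)
    field_simp
  · simp only [if_neg hil]
    have hl' : l ∈ s.erase i := Finset.mem_erase.mpr ⟨fun h => hil h.symm, hl⟩
    rw [Finset.prod_eq_zero hl' (by ring)]
    ring


lemma integrableOn_zpow_Ioi {R : ℝ} (hR : 0 < R) {n : ℤ} (hn : n < -1) :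
    IntegrableOn (fun r : ℝ => r ^ n) (Set.Ioi R) := by
  have h := integrableOn_Ioi_rpow_of_lt (a := (n : ℝ)) (by exact_mod_cast hn) hR
  refine h.congr_fun (fun x _ => ?_) measurableSet_Ioi
  exact Real.rpow_intCast x n

lemma integral_zpow_Ioi {R : ℝ} (hR : 0 < R) {n : ℤ} (hn : n < -1) :
    ∫ r in Set.Ioi R, r ^ n = R ^ (n + 1) / (-(n : ℝ) - 1) := by
  have h := integral_Ioi_rpow_of_lt (a := (n : ℝ)) (by exact_mod_cast hn) hR
  have h2 : ∫ r in Set.Ioi R, r ^ n = ∫ r in Set.Ioi R, r ^ ((n : ℝ)) := by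
    refine setIntegral_congr_fun measurableSet_Ioi fun x _ => ?_
    exact (Real.rpow_intCast x n).symm
  rw [h2, h]
  have h3 : R ^ ((n : ℝ) + 1) = R ^ (n + 1) := by
    rw [show ((n : ℝ) + 1) = ((n + 1 : ℤ) : ℝ) by push_cast; ring, Real.rpow_intCast]
  rw [h3]
  have h4 : -(n:ℝ) - 1 = -((n:ℝ)+1) := by ring
  rw [h4, div_neg, neg_div]

lemma mat_ident (k d : ℕ) (hD : ∀ m n : ℕ, (d:ℝ) - 2*m - 2*n ≠ 0) {R : ℝ} (hR : 0 < R)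
    (i l : ℕ) (hi : i ∈ Finset.Icc 1 k) (hl : l ∈ Finset.Icc 1 k) :
    ∑ j ∈ Finset.Icc 1 k,
      (R ^ (2*(i:ℤ) + 2*j - d) / ((d:ℝ) - 2*i - 2*j)) *
      (R ^ ((d:ℤ) - 2*j - 2*l) / ((d:ℝ) - 2*j - 2*l) *
        ((∏ m ∈ Finset.Icc 1 k, ((d:ℝ) - 2*j - 2*m)) /
          (∏ m ∈ (Finset.Icc 1 k).erase j, (2*(m:ℝ) - 2*j))) *
        ((∏ m ∈ Finset.Icc 1 k, ((d:ℝ) - 2*l - 2*m)) /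
          (∏ m ∈ (Finset.Icc 1 k).erase l, (2*(m:ℝ) - 2*l))))
      = if i = l then 1 else 0 := by
  have hkey := key_ident k (d:ℝ) hD i l hi hl
  have hstep : ∀ j ∈ Finset.Icc 1 k,
      (R ^ (2*(i:ℤ) + 2*j - d) / ((d:ℝ) - 2*i - 2*j)) *
      (R ^ ((d:ℤ) - 2*j - 2*l) / ((d:ℝ) - 2*j - 2*l) *
        ((∏ m ∈ Finset.Icc 1 k, ((d:ℝ) - 2*j - 2*m)) /
          (∏ m ∈ (Finset.Icc 1 k).erase j, (2*(m:ℝ) - 2*j))) *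
        ((∏ m ∈ Finset.Icc 1 k, ((d:ℝ) - 2*l - 2*m)) /
          (∏ m ∈ (Finset.Icc 1 k).erase l, (2*(m:ℝ) - 2*l))))
      = R ^ (2*(i:ℤ) - 2*l) *
        (((∏ m ∈ Finset.Icc 1 k, ((d:ℝ) - 2*j - 2*m)) /
          (∏ m ∈ (Finset.Icc 1 k).erase j, (2*(m:ℝ) - 2*j))) *
        ((∏ m ∈ Finset.Icc 1 k, ((d:ℝ) - 2*l - 2*m)) /
          (∏ m ∈ (Finset.Icc 1 k).erase l, (2*(m:ℝ) - 2*l))) /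
        (((d:ℝ) - 2*i - 2*j) * ((d:ℝ) - 2*j - 2*l))) := by
    intro j hj
    have hRR : R ^ (2*(i:ℤ) + 2*j - d) * R ^ ((d:ℤ) - 2*j - 2*l)
        = R ^ (2*(i:ℤ) - 2*l) := by
      rw [← zpow_add₀ (ne_of_gt hR)]
      congr 1
      ring
    rw [← hRR]
    generalize (∏ m ∈ Finset.Icc 1 k, ((d:ℝ) - 2*j - 2*m)) /
          (∏ m ∈ (Finset.Icc 1 k).erase j, (2*(m:ℝ) - 2*j)) = X
    generalize (∏ m ∈ Finset.Icc 1 k, ((d:ℝ) - 2*l - 2*m)) /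
          (∏ m ∈ (Finset.Icc 1 k).erase l, (2*(m:ℝ) - 2*l)) = Y
    have hA := hD i j
    have hB := hD j l
    field_simp
  rw [Finset.sum_congr rfl hstep, ← Finset.mul_sum, hkey]
  by_cases hil : i = l
  · subst hil
    simp
  · simp [hil]

lemma measurable_zpow_real (n : ℤ) : Measurable fun r : ℝ => r ^ n := by
  cases n with
  | ofNat m => simpa using measurable_id.pow_const m
  | negSucc m =>
    have h : Measurable fun r : ℝ => (r ^ (m+1))⁻¹ :=
      (measurable_id.pow_const (m+1)).inv
    simpa [zpow_negSucc] using h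

-- integrability of g r * r^(2i-1)
lemma cross_integrable (d k : ℕ) (hodd : Odd d) (hk : 4 * k < d) {R : ℝ} (hR : 0 < R)
    (g : ℝ → ℝ) (hmeas : Measurable g)
    (hg : IntegrableOn (fun r => g r ^ 2 * r ^ ((d : ℤ) - 1)) (Set.Ioi R))
    (i : ℕ) (hi : i ∈ Finset.Icc 1 k) :
    IntegrableOn (fun r => g r * r ^ (2 * (i:ℤ) - 1)) (Set.Ioi R) := by
  obtain ⟨q, hq⟩ : ∃ q : ℕ, d = 2 * q + 1 := hodd
  have hi' := Finset.mem_Icc.mp hi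
  have hexp : (4 * (i:ℤ) - d - 1) < -1 := by
    have : 4 * i < d := lt_of_le_of_lt (by omega : 4 * i ≤ 4 * k) hk
    omega
  have hbint : IntegrableOn
      (fun r => (g r ^ 2 * r ^ ((d:ℤ) - 1) + r ^ (4*(i:ℤ) - d - 1)) / 2) (Set.Ioi R) := by
    exact (hg.add (integrableOn_zpow_Ioi hR hexp)).div_const 2
  have hzm : Measurable fun r : ℝ => r ^ (2 * (i:ℤ) - 1) := measurable_zpow_real _
  refine Integrable.mono' hbint ((hmeas.mul hzm).aestronglyMeasurable) ?_
  rw [ae_restrict_iff' measurableSet_Ioi]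
  refine Filter.Eventually.of_forall fun r hr => ?_
  have hr0 : (0:ℝ) < r := lt_trans hR hr
  have h1 : ‖g r * r ^ (2 * (i:ℤ) - 1)‖ = |g r| * r ^ (2 * (i:ℤ) - 1) := by
    rw [Real.norm_eq_abs, abs_mul, abs_of_pos (zpow_pos hr0 _)]
  rw [h1]
  have hsplit : r ^ (2 * (i:ℤ) - 1) = r ^ (q:ℤ) * r ^ (2 * (i:ℤ) - 1 - q) := by
    rw [← zpow_add₀ hr0.ne']
    congr 1
    ring
  rw [hsplit, ← mul_assoc]
  have h2 := two_mul_le_add_sq (|g r| * r ^ (q:ℤ)) (r ^ (2 * (i:ℤ) - 1 - q))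
  have h3 : (|g r| * r ^ (q:ℤ)) ^ 2 = g r ^ 2 * r ^ ((d:ℤ) - 1) := by
    rw [mul_pow, sq_abs]
    congr 1
    rw [← zpow_natCast (r ^ (q:ℤ)) 2, ← zpow_mul]
    congr 1
    omega
  have h4 : (r ^ (2 * (i:ℤ) - 1 - q)) ^ 2 = r ^ (4*(i:ℤ) - d - 1) := by
    rw [← zpow_natCast (r ^ (2 * (i:ℤ) - 1 - q)) 2, ← zpow_mul]
    congr 1
    omega
  nlinarith [h2, h3, h4]


lemma quad_integral (d k : ℕ) (hodd : Odd d) (hk : 4 * k < d) {R : ℝ} (hR : 0 < R)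
    (g : ℝ → ℝ) (hmeas : Measurable g)
    (hg : IntegrableOn (fun r => g r ^ 2 * r ^ ((d : ℤ) - 1)) (Set.Ioi R))
    (lam : ℕ → ℝ) :
    ∫ r in Set.Ioi R,
        (g r - ∑ i ∈ Finset.Icc 1 k, lam i * r ^ (2 * (i:ℤ) - d)) ^ 2 * r ^ ((d:ℤ) - 1)
      = (∫ r in Set.Ioi R, g r ^ 2 * r ^ ((d:ℤ) - 1))
        - 2 * ∑ i ∈ Finset.Icc 1 k,
            lam i * (∫ r in Set.Ioi R, g r * r ^ (2 * (i:ℤ) - 1))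
        + ∑ i ∈ Finset.Icc 1 k, ∑ j ∈ Finset.Icc 1 k,
            lam i * lam j * (R ^ (2 * (i:ℤ) + 2 * (j:ℤ) - d) / ((d:ℝ) - 2 * i - 2 * j)) := by
  set s := Finset.Icc 1 k with hs
  have hij : ∀ i ∈ s, ∀ j ∈ s, (2 * (i:ℤ) + 2 * (j:ℤ) - d - 1) < -1 := by
    intro i hi j hj
    have h1 := (Finset.mem_Icc.mp hi).2
    have h2 := (Finset.mem_Icc.mp hj).2
    have : 2 * i + 2 * j < d := by omega
    omega
  have hcr : ∀ i ∈ s, IntegrableOn (fun r => g r * r ^ (2 * (i:ℤ) - 1)) (Set.Ioi R) :=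
    fun i hi => cross_integrable d k hodd hk hR g hmeas hg i hi
  have hf1 : IntegrableOn
      (fun r => ∑ i ∈ s, 2 * lam i * (g r * r ^ (2 * (i:ℤ) - 1))) (Set.Ioi R) :=
    integrable_finset_sum _ (fun i hi => (hcr i hi).const_mul _)
  have hf2 : IntegrableOn
      (fun r => ∑ i ∈ s, ∑ j ∈ s, lam i * lam j * r ^ (2 * (i:ℤ) + 2 * (j:ℤ) - d - 1))
      (Set.Ioi R) :=
    integrable_finset_sum _ (fun i hi => integrable_finset_sum _
      (fun j hj => (integrableOn_zpow_Ioi hR (hij i hi j hj)).const_mul _))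
  have heq : Set.EqOn
      (fun r => (g r - ∑ i ∈ s, lam i * r ^ (2 * (i:ℤ) - d)) ^ 2 * r ^ ((d:ℤ) - 1))
      (fun r => g r ^ 2 * r ^ ((d:ℤ) - 1)
        - (∑ i ∈ s, 2 * lam i * (g r * r ^ (2 * (i:ℤ) - 1)))
        + ∑ i ∈ s, ∑ j ∈ s, lam i * lam j * r ^ (2 * (i:ℤ) + 2 * (j:ℤ) - d - 1))
      (Set.Ioi R) := by
    intro r hr
    have hr0 : (0:ℝ) < r := lt_trans hR hr
    simp only
    rw [sub_sq, add_mul, sub_mul]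
    congr 1
    · congr 1
      rw [Finset.mul_sum, Finset.sum_mul]
      refine Finset.sum_congr rfl fun i hi => ?_
      have e1 : r ^ (2 * (i:ℤ) - d) * r ^ ((d:ℤ) - 1) = r ^ (2 * (i:ℤ) - 1) := by
        rw [← zpow_add₀ hr0.ne']; congr 1; ring
      calc 2 * g r * (lam i * r ^ (2 * (i:ℤ) - d)) * r ^ ((d:ℤ) - 1)
          = 2 * lam i * (g r * (r ^ (2 * (i:ℤ) - d) * r ^ ((d:ℤ) - 1))) := by ring
        _ = 2 * lam i * (g r * r ^ (2 * (i:ℤ) - 1)) := by rw [e1]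
    · rw [sq, Finset.sum_mul_sum, Finset.sum_mul]
      refine Finset.sum_congr rfl fun i hi => ?_
      rw [Finset.sum_mul]
      refine Finset.sum_congr rfl fun j hj => ?_
      have e2 : r ^ (2 * (i:ℤ) - d) * r ^ (2 * (j:ℤ) - d) * r ^ ((d:ℤ) - 1)
          = r ^ (2 * (i:ℤ) + 2 * (j:ℤ) - d - 1) := by
        rw [← zpow_add₀ hr0.ne', ← zpow_add₀ hr0.ne']; congr 1; ring
      calc lam i * r ^ (2 * (i:ℤ) - d) * (lam j * r ^ (2 * (j:ℤ) - d)) * r ^ ((d:ℤ) - 1)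
          = lam i * lam j * (r ^ (2 * (i:ℤ) - d) * r ^ (2 * (j:ℤ) - d) * r ^ ((d:ℤ) - 1)) := by
            ring
        _ = lam i * lam j * r ^ (2 * (i:ℤ) + 2 * (j:ℤ) - d - 1) := by rw [e2]
  rw [setIntegral_congr_fun measurableSet_Ioi heq]
  have hsub : IntegrableOn
      (fun r => g r ^ 2 * r ^ ((d:ℤ) - 1)
        - ∑ i ∈ s, 2 * lam i * (g r * r ^ (2 * (i:ℤ) - 1))) (Set.Ioi R) := hg.sub hf1
  rw [integral_add hsub hf2, integral_sub hg hf1]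
  rw [integral_finset_sum _ (fun i hi => (hcr i hi).const_mul _)]
  rw [integral_finset_sum _ (fun i hi => integrable_finset_sum _
      (fun j hj => (integrableOn_zpow_Ioi hR (hij i hi j hj)).const_mul _))]
  congr 1
  · congr 1
    rw [Finset.mul_sum]
    refine Finset.sum_congr rfl fun i hi => ?_
    rw [integral_const_mul]
    ring
  · refine Finset.sum_congr rfl fun i hi => ?_
    rw [integral_finset_sum _
      (fun j hj => (integrableOn_zpow_Ioi hR (hij i hi j hj)).const_mul _)]
    refine Finset.sum_congr rfl fun j hj => ?_
    rw [integral_const_mul, integral_zpow_Ioi hR (hij i hi j hj)]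
    congr 1
    congr 1
    · congr 1
      ring
    · push_cast
      ring

/-- For odd d ≥ 3, k = ⌊d/4⌋, R > 0: the functions r^{2i−d}, 1 ≤ i ≤ k, are linearly
independent in L²(r ≥ R, r^{d−1}dr), and for g in this space the squared norm of the
projection onto the orthogonal complement of their span (realized as the infimum of
squared distances to the span) equals
∫ g² r^{d−1} − ∑_{i,j} (R^{d−2i−2j}/(d−2i−2j)) c_i c_j (∫ g r^{2i−1})(∫ g r^{2j−1}). -/
theorem projection_formula_g (d : ℕ) (hd : 3 ≤ d) (hodd : Odd d) (R : ℝ) (hR : 0 < R)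
    (g : ℝ → ℝ) (hmeas : Measurable g)
    (hg : IntegrableOn (fun r => g r ^ 2 * r ^ ((d : ℤ) - 1)) (Set.Ioi R)) :
    (∀ lam : ℕ → ℝ,
        (∀ᵐ r ∂(volume.restrict (Set.Ioi R)),
          ∑ i ∈ Finset.Icc 1 (d / 4), lam i * r ^ ((2 * i : ℤ) - d) = 0) →
        ∀ i ∈ Finset.Icc 1 (d / 4), lam i = 0) ∧
    (⨅ lam : ℕ → ℝ,
        ∫ r in Set.Ioi R,
          (g r - ∑ i ∈ Finset.Icc 1 (d / 4), lam i * r ^ ((2 * i : ℤ) - d)) ^ 2 *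
            r ^ ((d : ℤ) - 1))
      = (∫ r in Set.Ioi R, g r ^ 2 * r ^ ((d : ℤ) - 1))
        - ∑ i ∈ Finset.Icc 1 (d / 4), ∑ j ∈ Finset.Icc 1 (d / 4),
            R ^ ((d : ℤ) - 2 * i - 2 * j) / ((d : ℝ) - 2 * i - 2 * j) *
              ((∏ l ∈ Finset.Icc 1 (d / 4), ((d : ℝ) - 2 * i - 2 * l)) /
                (∏ l ∈ (Finset.Icc 1 (d / 4)).erase i, ((2 * l : ℝ) - 2 * i))) *
              ((∏ l ∈ Finset.Icc 1 (d / 4), ((d : ℝ) - 2 * j - 2 * l)) /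
                (∏ l ∈ (Finset.Icc 1 (d / 4)).erase j, ((2 * l : ℝ) - 2 * j))) *
              (∫ r in Set.Ioi R, g r * r ^ (2 * i - 1)) *
              (∫ r in Set.Ioi R, g r * r ^ (2 * j - 1)) := by
  obtain ⟨t, ht⟩ := id hodd
  set k := d / 4 with hkdef
  have hk : 4 * k < d := by omega
  set s := Finset.Icc 1 k with hsdef
  have hD : ∀ m n : ℕ, (d:ℝ) - 2*m - 2*n ≠ 0 := by
    intro m n h
    have h2 : (d:ℝ) = 2*(m+n) := by push_cast; linarith
    have h3 : d = 2*(m+n) := by exact_mod_cast h2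
    omega
  constructor
  · -- linear independence
    intro lam hae i hi
    set T : Set ℝ := {r : ℝ | r ∈ Set.Ioi R ∧ ∑ i ∈ s, lam i * r ^ ((2 * i : ℤ) - d) = 0}
      with hTdef
    have hT : T.Infinite := by
      by_contra hfin
      rw [Set.not_infinite] at hfin
      have h1 : ∀ᵐ r ∂(volume : Measure ℝ), r ∈ Set.Ioi R →
          ∑ i ∈ s, lam i * r ^ ((2 * i : ℤ) - d) = 0 :=
        (ae_restrict_iff' measurableSet_Ioi).mp hae
      rw [MeasureTheory.ae_iff] at h1
      have hsub : Set.Ioi R ⊆ T ∪ {a : ℝ | ¬(a ∈ Set.Ioi R →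
          ∑ i ∈ s, lam i * a ^ ((2 * i : ℤ) - d) = 0)} := by
        intro r hr
        by_cases hz : ∑ i ∈ s, lam i * r ^ ((2 * i : ℤ) - d) = 0
        · exact Or.inl ⟨hr, hz⟩
        · exact Or.inr (fun h => hz (h hr))
      have hle : volume (Set.Ioi R) ≤ volume T + volume {a : ℝ | ¬(a ∈ Set.Ioi R →
          ∑ i ∈ s, lam i * a ^ ((2 * i : ℤ) - d) = 0)} :=
        (measure_mono hsub).trans (measure_union_le T _)
      rw [hfin.measure_zero, h1, Real.volume_Ioi] at hle
      simp at hle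
    set p : Polynomial ℝ := ∑ i ∈ s, Polynomial.C (lam i) * Polynomial.X ^ i with hp
    have hroots : ∀ r ∈ T, p.IsRoot (r ^ 2) := by
      intro r hr
      obtain ⟨hr1, hr2⟩ := hr
      have hr0 : (0:ℝ) < r := lt_trans hR hr1
      show Polynomial.eval (r ^ 2) p = 0
      rw [hp, Polynomial.eval_finset_sum]
      have hterm : ∀ i ∈ s, Polynomial.eval (r ^ 2) (Polynomial.C (lam i) * Polynomial.X ^ i)
          = (lam i * r ^ ((2 * i : ℤ) - d)) * r ^ (d : ℤ) := by
        intro i hi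
        rw [Polynomial.eval_mul, Polynomial.eval_C, Polynomial.eval_pow, Polynomial.eval_X]
        rw [← pow_mul]
        rw [show r ^ (2 * i) = r ^ ((2 * i : ℤ)) by rw [← zpow_natCast r (2*i)]; norm_num]
        rw [mul_assoc, ← zpow_add₀ hr0.ne']
        congr 2
        ring
      rw [Finset.sum_congr rfl hterm, ← Finset.sum_mul, hr2, zero_mul]
    have hpz : p = 0 := by
      apply Polynomial.eq_zero_of_infinite_isRoot
      have hinj : Set.InjOn (fun r : ℝ => r ^ 2) T := by
        intro a ha b hb hab
        simp only at hab
        have ha0 : R < a := ha.1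
        have hb0 : R < b := hb.1
        have h1 : a ≤ b := by nlinarith
        have h2 : b ≤ a := by nlinarith
        linarith
      refine Set.Infinite.mono ?_ (hT.image hinj)
      rintro x ⟨r, hrT, rfl⟩
      exact hroots r hrT
    have hco := congrArg (fun q => Polynomial.coeff q i) hpz
    simp only [hp, Polynomial.finset_sum_coeff, Polynomial.coeff_C_mul,
      Polynomial.coeff_X_pow, Polynomial.coeff_zero, mul_ite, mul_one, mul_zero] at hco
    rwa [Finset.sum_ite_eq s i (fun j => lam j), if_pos hi] at hco
  · -- projection formula
    have heven : Even ((d:ℤ) - 1) := ⟨t, by push_cast; omega⟩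
    have hnonneg : ∀ lam : ℕ → ℝ, 0 ≤ ∫ r in Set.Ioi R,
        (g r - ∑ i ∈ s, lam i * r ^ ((2 * i : ℤ) - d)) ^ 2 * r ^ ((d : ℤ) - 1) := by
      intro lam
      apply integral_nonneg
      intro r
      exact mul_nonneg (sq_nonneg _) (heven.zpow_nonneg r)
    set B := ∫ r in Set.Ioi R, g r ^ 2 * r ^ ((d:ℤ) - 1) with hB
    set bz : ℕ → ℝ := fun i => ∫ r in Set.Ioi R, g r * r ^ (2 * (i:ℤ) - 1) with hbzdef
    set Gm : ℕ → ℕ → ℝ := fun i j => R ^ (2 * (i:ℤ) + 2 * (j:ℤ) - d) / ((d:ℝ) - 2*i - 2*j)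
      with hGmdef
    set cc : ℕ → ℝ := fun i =>
      (∏ m ∈ s, ((d:ℝ) - 2*i - 2*m)) / (∏ m ∈ s.erase i, (2*(m:ℝ) - 2*i)) with hccdef
    set A : ℕ → ℕ → ℝ := fun i j =>
      R ^ ((d:ℤ) - 2*i - 2*j) / ((d:ℝ) - 2*i - 2*j) * cc i * cc j with hAdef
    set lst : ℕ → ℝ := fun j => ∑ l ∈ s, A j l * bz l with hlstdef
    have hQ : ∀ lam : ℕ → ℝ,
        (∫ r in Set.Ioi R,
          (g r - ∑ i ∈ s, lam i * r ^ ((2 * i : ℤ) - d)) ^ 2 * r ^ ((d : ℤ) - 1))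
        = B - 2 * ∑ i ∈ s, lam i * bz i + ∑ i ∈ s, ∑ j ∈ s, lam i * lam j * Gm i j :=
      fun lam => quad_integral d k hodd hk hR g hmeas hg lam
    have hrow : ∀ i ∈ s, ∑ j ∈ s, Gm i j * lst j = bz i := by
      intro i hi
      calc ∑ j ∈ s, Gm i j * lst j
          = ∑ j ∈ s, ∑ l ∈ s, Gm i j * (A j l * bz l) := by
            refine Finset.sum_congr rfl fun j hj => ?_
            rw [hlstdef, Finset.mul_sum]
        _ = ∑ l ∈ s, (∑ j ∈ s, Gm i j * A j l) * bz l := by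
            rw [Finset.sum_comm]
            refine Finset.sum_congr rfl fun l hl => ?_
            rw [Finset.sum_mul]
            exact Finset.sum_congr rfl fun j hj => by ring
        _ = ∑ l ∈ s, (if i = l then 1 else 0) * bz l := by
            refine Finset.sum_congr rfl fun l hl => ?_
            congr 1
            have := mat_ident k d hD hR i l hi hl
            simp only [hGmdef, hAdef, hccdef]
            exact this
        _ = bz i := by
            simp only [ite_mul, one_mul, zero_mul]
            rw [Finset.sum_ite_eq s i (fun l => bz l), if_pos hi]
    have hGsym : ∀ i j : ℕ, Gm i j = Gm j i := by
      intro i j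
      simp only [hGmdef]
      rw [show 2*(i:ℤ) + 2*(j:ℤ) - d = 2*(j:ℤ) + 2*(i:ℤ) - d by ring,
        show (d:ℝ) - 2*i - 2*j = (d:ℝ) - 2*j - 2*i by ring]
    have hT1 : ∀ f : ℕ → ℝ, ∑ i ∈ s, ∑ j ∈ s, f i * lst j * Gm i j = ∑ i ∈ s, f i * bz i := by
      intro f
      refine Finset.sum_congr rfl fun i hi => ?_
      rw [← hrow i hi, Finset.mul_sum]
      exact Finset.sum_congr rfl fun j hj => by ring
    have hT2 : ∀ f : ℕ → ℝ, ∑ i ∈ s, ∑ j ∈ s, lst i * f j * Gm i j = ∑ i ∈ s, f i * bz i := by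
      intro f
      rw [Finset.sum_comm]
      refine Finset.sum_congr rfl fun j hj => ?_
      rw [← hrow j hj, Finset.mul_sum]
      refine Finset.sum_congr rfl fun i hi => ?_
      rw [hGsym i j]
      ring
    have hTlst : ∑ i ∈ s, ∑ j ∈ s, lst i * lst j * Gm i j = ∑ i ∈ s, lst i * bz i := hT1 lst
    have hmu : ∀ lam : ℕ → ℝ,
        ∑ i ∈ s, ∑ j ∈ s, (lam i - lst i) * (lam j - lst j) * Gm i j
        = ∑ i ∈ s, ∑ j ∈ s, lam i * lam j * Gm i j
          - ∑ i ∈ s, lam i * bz i - ∑ i ∈ s, lam i * bz i + ∑ i ∈ s, lst i * bz i := by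
      intro lam
      have hstep : ∑ i ∈ s, ∑ j ∈ s, (lam i - lst i) * (lam j - lst j) * Gm i j
          = ∑ i ∈ s, ∑ j ∈ s, (lam i * lam j * Gm i j - lam i * lst j * Gm i j
              - lst i * lam j * Gm i j + lst i * lst j * Gm i j) := by
        refine Finset.sum_congr rfl fun i hi => Finset.sum_congr rfl fun j hj => by ring
      rw [hstep]
      simp only [Finset.sum_add_distrib, Finset.sum_sub_distrib]
      rw [hT1 lam, hT2 lam, hTlst]
    have hq0 : ∀ lam : ℕ → ℝ,
        0 ≤ ∑ i ∈ s, ∑ j ∈ s, (lam i - lst i) * (lam j - lst j) * Gm i j := by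
      intro lam
      have he : (fun r : ℝ => (0:ℝ) ^ 2 * r ^ ((d:ℤ) - 1)) = fun _ => (0:ℝ) := by
        funext r; ring
      have h0i : IntegrableOn (fun r : ℝ => (0:ℝ) ^ 2 * r ^ ((d:ℤ) - 1)) (Set.Ioi R) := by
        rw [he]
        exact integrableOn_zero
      have h1 := quad_integral d k hodd hk hR (fun _ => (0:ℝ)) measurable_const h0i
        (fun i => lam i - lst i)
      simp only [zero_sub, neg_sq, zero_mul, integral_zero, mul_zero,
        Finset.sum_const_zero, sub_zero, zero_add] at h1
      rw [he, integral_zero, zero_add] at h1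
      simp only [hGmdef]
      rw [← h1]
      apply integral_nonneg
      intro r
      exact mul_nonneg (sq_nonneg _) (heven.zpow_nonneg r)
    have hQlow : ∀ lam : ℕ → ℝ,
        (∫ r in Set.Ioi R,
          (g r - ∑ i ∈ s, lst i * r ^ ((2 * i : ℤ) - d)) ^ 2 * r ^ ((d : ℤ) - 1))
        ≤ ∫ r in Set.Ioi R,
          (g r - ∑ i ∈ s, lam i * r ^ ((2 * i : ℤ) - d)) ^ 2 * r ^ ((d : ℤ) - 1) := by
      intro lam
      rw [hQ lam, hQ lst]
      have h2 := hq0 lam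
      rw [hmu lam] at h2
      linarith [hTlst]
    have hvalue : (∫ r in Set.Ioi R,
          (g r - ∑ i ∈ s, lst i * r ^ ((2 * i : ℤ) - d)) ^ 2 * r ^ ((d : ℤ) - 1))
        = B - ∑ i ∈ s, ∑ j ∈ s, A i j * bz i * bz j := by
      rw [hQ lst, hTlst]
      have hexp : ∑ i ∈ s, lst i * bz i = ∑ i ∈ s, ∑ j ∈ s, A i j * bz i * bz j := by
        refine Finset.sum_congr rfl fun i hi => ?_
        rw [hlstdef, Finset.sum_mul]
        exact Finset.sum_congr rfl fun j hj => by ring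
      rw [hexp]
      ring
    have hpoweq : ∀ i ∈ s, (∫ r in Set.Ioi R, g r * r ^ (2 * i - 1))
        = ∫ r in Set.Ioi R, g r * r ^ (2 * (i:ℤ) - 1) := by
      intro i hi
      have h1 : 1 ≤ i := (Finset.mem_Icc.mp hi).1
      have h2 : ∀ r : ℝ, g r * r ^ (2 * i - 1) = g r * r ^ (2 * (i:ℤ) - 1) := by
        intro r
        congr 1
        rw [← zpow_natCast r (2 * i - 1)]
        congr 1
        omega
      simp_rw [h2]
    have hstmt : (∑ i ∈ s, ∑ j ∈ s,
            R ^ ((d : ℤ) - 2 * i - 2 * j) / ((d : ℝ) - 2 * i - 2 * j) *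
              ((∏ l ∈ s, ((d : ℝ) - 2 * i - 2 * l)) /
                (∏ l ∈ s.erase i, ((2 * l : ℝ) - 2 * i))) *
              ((∏ l ∈ s, ((d : ℝ) - 2 * j - 2 * l)) /
                (∏ l ∈ s.erase j, ((2 * l : ℝ) - 2 * j))) *
              (∫ r in Set.Ioi R, g r * r ^ (2 * i - 1)) *
              (∫ r in Set.Ioi R, g r * r ^ (2 * j - 1)))
        = ∑ i ∈ s, ∑ j ∈ s, A i j * bz i * bz j := by
      refine Finset.sum_congr rfl fun i hi => Finset.sum_congr rfl fun j hj => ?_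
      simp only [hpoweq i hi, hpoweq j hj, hAdef, hccdef, hbzdef]
    rw [hstmt, ← hvalue]
    apply le_antisymm
    · refine ciInf_le ⟨0, ?_⟩ lst
      rintro x ⟨lam, rfl⟩
      exact hnonneg lam
    · exact le_ciInf hQlow
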